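/- Let G be a graph and u, v two distinct vertices with N[u] = N[v] (equal closed neighborhoods, so in particular u ∼ v). Then m_G(−1) = m_{G−u}(−1) + 1. -/

import Mathlib

open SimpleGraph Matrix Module

-- Multiplicity of `μ` as an adjacency eigenvalue of `G` (0 if not an eigenvalue).
open scoped Classical in
noncomputable def eigMult {V : Type*} [Fintype V] (G : SimpleGraph V) (μ : ℝ) : ℕ :=
  Module.finrank ℝ (Module.End.eigenspace (Matrix.toLin' (G.adjMatrix ℝ)) μ)

-- The set of adjacency eigenvalues of `G`.
open scoped Classical in
noncomputable def eigSet {V : Type*} [Fintype V] (G : SimpleGraph V) : Set ℝ :=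
  {μ : ℝ | Module.End.HasEigenvalue (Matrix.toLin' (G.adjMatrix ℝ)) μ}

lemma aux_eig_rank {n : Type*} [Fintype n] [DecidableEq n] (B : Matrix n n ℝ) :
    Module.finrank ℝ (Module.End.eigenspace (Matrix.toLin' B) (-1)) + (B + 1).rank
      = Fintype.card n := by
  have h1 : Module.End.eigenspace (Matrix.toLin' B) (-1)
      = LinearMap.ker (Matrix.toLin' (B + 1)) := by
    rw [Module.End.eigenspace_def, map_add, Matrix.toLin'_one]
    congr 1
    ext x
    simp [Module.End.one_eq_id, sub_eq_add_neg]
  have h2 := LinearMap.finrank_range_add_finrank_ker (Matrix.toLin' (B + 1))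
  rw [Module.finrank_fintype_fun_eq_card] at h2
  rw [h1, Matrix.rank, ← Matrix.toLin'_apply']
  omega

lemma aux_rank_eq {n m : Type*} [Fintype n] [Fintype m] [DecidableEq n] [DecidableEq m]
    (B : Matrix n n ℝ) (C : Matrix m m ℝ) (p : n → m) (q : m → n)
    (hpq : ∀ x, p (q x) = x) (hB : ∀ i j, B i j = C (p i) (p j)) : B.rank = C.rank := by
  have hBC : B = ((1 : Matrix m m ℝ).submatrix p (Equiv.refl m) * C)
      * (1 : Matrix m m ℝ).submatrix (Equiv.refl m) p := by
    rw [Matrix.one_submatrix_mul, Matrix.mul_submatrix_one]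
    ext i j
    simp [hB i j]
  have hCB : C = ((1 : Matrix n n ℝ).submatrix q (Equiv.refl n) * B)
      * (1 : Matrix n n ℝ).submatrix (Equiv.refl n) q := by
    rw [Matrix.one_submatrix_mul, Matrix.mul_submatrix_one]
    ext i j
    simp [hB, hpq]
  apply le_antisymm
  · calc B.rank = _ := by rw [hBC]
      _ ≤ _ := Matrix.rank_mul_le_left _ _
      _ ≤ C.rank := Matrix.rank_mul_le_right _ _
  · calc C.rank = _ := by rw [hCB]
      _ ≤ _ := Matrix.rank_mul_le_left _ _
      _ ≤ B.rank := Matrix.rank_mul_le_right _ _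

lemma aux_ite_add (a b : Prop) [Decidable a] [Decidable b] (hab : ¬(a ∧ b)) :
    (if a then (1:ℝ) else 0) + (if b then 1 else 0) = if a ∨ b then 1 else 0 := by
  by_cases ha : a <;> by_cases hb : b <;> simp [ha, hb] <;> tauto

open scoped Classical in
theorem eigMult_neg_one_duplicate_vertex {V : Type*} [Fintype V] (G : SimpleGraph V) (u v : V)
    (huv : u ≠ v) (h : insert u (G.neighborSet u) = insert v (G.neighborSet v)) :
    eigMult G (-1) = eigMult (G.induce {w | w ≠ u}) (-1) + 1 := by
  classical
  set G' := G.induce {w | w ≠ u} with hG'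
  set B := G.adjMatrix ℝ with hB
  set C := G'.adjMatrix ℝ with hC
  -- closed neighbourhood condition, pointwise
  have hN : ∀ w, (w = u ∨ G.Adj u w) ↔ (w = v ∨ G.Adj v w) := by
    intro w
    have := Set.ext_iff.mp h w
    simpa [Set.mem_insert_iff] using this
  have hvu : v ≠ u := Ne.symm huv
  set p : V → {w : V | w ≠ u} := fun w => if hw : w = u then ⟨v, hvu⟩ else ⟨w, hw⟩ with hp
  have hpval : ∀ x : {w : V | w ≠ u}, p (x : V) = x := by
    intro x
    have hx : (x : V) ≠ u := x.2
    simp [hp, hx]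
  have key : ∀ i j : V, (i = j ∨ G.Adj i j) ↔ (p i = p j ∨ G.Adj (p i : V) (p j : V)) := by
    intro i j
    by_cases hi : i = u <;> by_cases hj : j = u
    · subst hi; subst hj
      simp [hp]
    · have hpi : (p i : V) = v := by simp [hp, hi]
      have hpj : (p j : V) = j := by simp [hp, hj]
      rw [Subtype.ext_iff, hpi, hpj, hi]
      have := hN j
      have e1 : u = j ↔ j = u := eq_comm
      have e2 : v = j ↔ j = v := eq_comm
      tauto
    · have hpj : (p j : V) = v := by simp [hp, hj]
      have hpi : (p i : V) = i := by simp [hp, hi]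
      rw [Subtype.ext_iff, hpi, hpj, hj]
      rw [G.adj_comm i u, G.adj_comm i v]
      exact hN i
    · have hpi : (p i : V) = i := by simp [hp, hi]
      have hpj : (p j : V) = j := by simp [hp, hj]
      rw [Subtype.ext_iff, hpi, hpj]
  -- entries
  have hentry : ∀ i j, (B + 1) i j = (C + 1) (p i) (p j) := by
    intro i j
    have h1 : (B + 1) i j = if (i = j ∨ G.Adj i j) then (1:ℝ) else 0 := by
      rw [Matrix.add_apply, hB, SimpleGraph.adjMatrix_apply, Matrix.one_apply, add_comm]
      exact aux_ite_add _ _ (fun ⟨he, ha⟩ => G.loopless.irrefl i (he ▸ ha))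
    have h2 : (C + 1) (p i) (p j) = if (p i = p j ∨ G.Adj (p i : V) (p j : V)) then (1:ℝ) else 0 := by
      rw [Matrix.add_apply, hC, SimpleGraph.adjMatrix_apply, Matrix.one_apply, add_comm]
      have : G'.Adj (p i) (p j) ↔ G.Adj (p i : V) (p j : V) := by
        rw [hG']; exact SimpleGraph.comap_adj
      rw [if_congr this rfl rfl]
      refine aux_ite_add _ _ ?_
      rintro ⟨he, ha⟩
      exact G.loopless.irrefl _ (by rw [Subtype.ext_iff] at he; exact he ▸ ha)
    rw [h1, h2, if_congr (key i j) rfl rfl]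
  -- ranks agree
  have hrank : (B + 1).rank = (C + 1).rank :=
    aux_rank_eq _ _ p (fun x => (x : V)) hpval hentry
  -- counting
  have e1 : eigMult G (-1) + (B + 1).rank = Fintype.card V := aux_eig_rank B
  have e2 : eigMult G' (-1) + (C + 1).rank = Fintype.card {w : V | w ≠ u} := aux_eig_rank C
  have hcard : Fintype.card V = Fintype.card {w : V | w ≠ u} + 1 := by
    have h1 : Fintype.card {w : V | w ≠ u} = Fintype.card {w : V // ¬ w = u} :=
      Fintype.card_congr (Equiv.subtypeEquivRight fun _ => Iff.rfl)
    have h2 : Fintype.card {w : V // w = u} = 1 := Fintype.card_subtype_eq u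
    have h3 := Fintype.card_subtype_compl (fun w : V => w = u)
    have h4 : 0 < Fintype.card V := Fintype.card_pos_iff.mpr ⟨u⟩
    omega
  have hle : (C + 1).rank ≤ Fintype.card {w : V | w ≠ u} := Matrix.rank_le_card_width _
  omega
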